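/- Let (X_i)_{i≥1} be a sequence of independent random variables, each uniformly distributed on the interval (0,1), and let k ≥ 1 be a fixed integer. Then almost surely, as n → ∞, the normalized elementary symmetric polynomial σ_k^{(n)}/C(n,k) converges to (1/2)^k, where C(n,k) is the binomial coefficient. -/

import Mathlib

open MeasureTheory Filter ProbabilityTheory Finset

lemma card_inj_piFinset (s : Finset ℕ) (k : ℕ) :
    ((Fintype.piFinset fun _ : Fin k => s).filter
      (fun f => Function.Injective f)).card = s.card.descFactorial k := by
  have e : {f // f ∈ (Fintype.piFinset fun _ : Fin k => s).filter
      (fun f => Function.Injective f)} ≃ (Fin k ↪ {i // i ∈ s}) := by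
    refine
      { toFun := fun f => ⟨fun j => ⟨f.1 j, ?_⟩, ?_⟩
        invFun := fun e => ⟨fun j => (e j : ℕ), ?_⟩
        left_inv := ?_, right_inv := ?_ }
    · have := f.2
      simp only [mem_filter, Fintype.mem_piFinset] at this
      exact this.1 j
    · intro a b hab
      have := f.2
      simp only [mem_filter, Fintype.mem_piFinset] at this
      exact this.2 (congrArg Subtype.val hab)
    · simp only [mem_filter, Fintype.mem_piFinset]
      exact ⟨fun j => (e j).2, fun a b hab => e.injective (Subtype.ext hab)⟩
    · intro f; ext j; rfl
    · intro e; ext j; rfl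
  rw [← Fintype.card_coe, Fintype.card_congr e, Fintype.card_embedding_eq,
    Fintype.card_coe, Fintype.card_fin]

lemma sum_inj_piFinset (s : Finset ℕ) (k : ℕ) (x : ℕ → ℝ) :
    ∑ f ∈ (Fintype.piFinset fun _ : Fin k => s).filter (fun f => Function.Injective f),
        ∏ j, x (f j)
      = (k.factorial : ℝ) * ∑ t ∈ s.powersetCard k, ∏ i ∈ t, x i := by
  rw [← Finset.sum_fiberwise_of_maps_to (g := fun f : Fin k → ℕ => Finset.image f Finset.univ)
    (t := s.powersetCard k) ?_]
  · rw [Finset.mul_sum]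
    refine Finset.sum_congr rfl fun t ht => ?_
    rw [Finset.mem_powersetCard] at ht
    have hsub : ((Fintype.piFinset fun _ : Fin k => s).filter
        (fun f => Function.Injective f)).filter (fun f => Finset.image f Finset.univ = t)
        = (Fintype.piFinset fun _ : Fin k => t).filter (fun f => Function.Injective f) := by
      ext f
      simp only [mem_filter, Fintype.mem_piFinset]
      constructor
      · rintro ⟨⟨hmem, hinj⟩, himg⟩
        exact ⟨fun j => himg ▸ Finset.mem_image_of_mem f (mem_univ j), hinj⟩
      · rintro ⟨hmem, hinj⟩
        refine ⟨⟨fun j => ht.1 (hmem j), hinj⟩, ?_⟩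
        apply Finset.eq_of_subset_of_card_le
        · intro i hi
          rcases Finset.mem_image.mp hi with ⟨j, _, rfl⟩
          exact hmem j
        · rw [ht.2, Finset.card_image_of_injective _ hinj, Finset.card_univ,
            Fintype.card_fin]
    have hval : ∀ f ∈ ((Fintype.piFinset fun _ : Fin k => s).filter
        (fun f => Function.Injective f)).filter (fun f => Finset.image f Finset.univ = t),
        (∏ j, x (f j)) = ∏ i ∈ t, x i := by
      intro f hf
      simp only [mem_filter] at hf
      rw [← hf.2, Finset.prod_image (fun a _ b _ h => hf.1.2 h)]
    rw [Finset.sum_congr rfl hval, Finset.sum_const, hsub, card_inj_piFinset, ht.2,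
      Nat.descFactorial_self, nsmul_eq_mul]
  · intro f hf
    simp only [mem_filter, Fintype.mem_piFinset] at hf
    rw [Finset.mem_powersetCard]
    constructor
    · intro i hi
      rcases Finset.mem_image.mp hi with ⟨j, _, rfl⟩
      exact hf.1 j
    · rw [Finset.card_image_of_injective _ hf.2, Finset.card_univ, Fintype.card_fin]

lemma key_ineq (s : Finset ℕ) (k : ℕ) (x : ℕ → ℝ)
    (h0 : ∀ i ∈ s, 0 ≤ x i) (h1 : ∀ i ∈ s, x i ≤ 1) :
    (k.factorial : ℝ) * ∑ t ∈ s.powersetCard k, ∏ i ∈ t, x i ≤ (∑ i ∈ s, x i) ^ k ∧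
      (∑ i ∈ s, x i) ^ k ≤
        (k.factorial : ℝ) * (∑ t ∈ s.powersetCard k, ∏ i ∈ t, x i)
          + ((s.card ^ k - s.card.descFactorial k : ℕ) : ℝ) := by
  classical
  rw [Finset.sum_pow',
    ← Finset.sum_filter_add_sum_filter_not (Fintype.piFinset fun _ : Fin k => s)
      (fun f => Function.Injective f) (fun f => ∏ j, x (f j)),
    sum_inj_piFinset]
  have hterm0 : ∀ f ∈ (Fintype.piFinset fun _ : Fin k => s).filter
      (fun f => ¬ Function.Injective f), (0:ℝ) ≤ ∏ j, x (f j) := by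
    intro f hf
    simp only [mem_filter, Fintype.mem_piFinset] at hf
    exact Finset.prod_nonneg fun j _ => h0 _ (hf.1 j)
  constructor
  · have : (0:ℝ) ≤ ∑ f ∈ (Fintype.piFinset fun _ : Fin k => s).filter
        (fun f => ¬ Function.Injective f), ∏ j, x (f j) :=
      Finset.sum_nonneg hterm0
    linarith
  · have hle : ∑ f ∈ (Fintype.piFinset fun _ : Fin k => s).filter
        (fun f => ¬ Function.Injective f), ∏ j, x (f j)
        ≤ ((s.card ^ k - s.card.descFactorial k : ℕ) : ℝ) := by
      have : ∑ f ∈ (Fintype.piFinset fun _ : Fin k => s).filter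
          (fun f => ¬ Function.Injective f), ∏ j, x (f j)
          ≤ ∑ _f ∈ (Fintype.piFinset fun _ : Fin k => s).filter
            (fun f => ¬ Function.Injective f), (1:ℝ) := by
        refine Finset.sum_le_sum fun f hf => ?_
        simp only [mem_filter, Fintype.mem_piFinset] at hf
        exact Finset.prod_le_one (fun j _ => h0 _ (hf.1 j)) (fun j _ => h1 _ (hf.1 j))
      rw [Finset.sum_const, nsmul_eq_mul, mul_one] at this
      refine this.trans ?_
      have hcard : ((Fintype.piFinset fun _ : Fin k => s).filter
          (fun f => ¬ Function.Injective f)).card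
          = s.card ^ k - s.card.descFactorial k := by
        have htot := Finset.card_filter_add_card_filter_not
          (s := Fintype.piFinset fun _ : Fin k => s)
          (p := fun f => Function.Injective f)
        have hpi : (Fintype.piFinset fun _ : Fin k => s).card = s.card ^ k := by
          rw [Fintype.card_piFinset]
          simp
        have hinj := card_inj_piFinset s k
        omega
      rw [hcard]
    linarith

lemma det_tendsto (x : ℕ → ℝ) (h0 : ∀ i, 0 ≤ x i) (h1 : ∀ i, x i ≤ 1) (k : ℕ)
    (hS : Tendsto (fun n : ℕ => (∑ i ∈ range n, x i) / n) atTop (nhds (1/2 : ℝ))) :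
    Tendsto (fun n : ℕ => (∑ t ∈ (range n).powersetCard k, ∏ i ∈ t, x i) /
      (n.choose k : ℝ)) atTop (nhds ((1/2 : ℝ) ^ k)) := by
  have hdpos : ∀ n : ℕ, k ≤ n → (0:ℝ) < (n.descFactorial k : ℝ) := by
    intro n hnk
    have : n.descFactorial k ≠ 0 :=
      fun h => absurd (Nat.descFactorial_eq_zero_iff_lt.mp h) (not_lt.mpr hnk)
    exact_mod_cast Nat.pos_of_ne_zero this
  have hd1 : Tendsto (fun n : ℕ => (n.descFactorial k : ℝ) / (n:ℝ)^k) atTop (nhds 1) := by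
    have hprod : Tendsto (fun n : ℕ => ∏ i ∈ range k, (1 - (i:ℝ)/n)) atTop
        (nhds (∏ _i ∈ range k, (1:ℝ))) := by
      refine tendsto_finset_prod _ fun i _ => ?_
      simpa using tendsto_const_nhds.sub (tendsto_const_div_atTop_nhds_zero_nat (i:ℝ))
    rw [Finset.prod_const_one] at hprod
    refine Tendsto.congr' ?_ hprod
    filter_upwards [eventually_ge_atTop (max 1 k)] with n hn
    have hn1 : (1:ℕ) ≤ n := le_trans (le_max_left _ _) hn
    have hnk : k ≤ n := le_trans (le_max_right _ _) hn
    have hn0 : (n:ℝ) ≠ 0 := by positivity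
    have hcast : (n.descFactorial k : ℝ) = ∏ i ∈ range k, ((n:ℝ) - i) := by
      rw [Nat.descFactorial_eq_prod_range, Nat.cast_prod]
      refine Finset.prod_congr rfl fun i hi => ?_
      rw [Finset.mem_range] at hi
      rw [Nat.cast_sub (le_trans hi.le hnk)]
    have hpow : (n:ℝ)^k = ∏ _i ∈ range k, (n:ℝ) := by
      rw [Finset.prod_const, card_range]
    simp only [hcast, hpow, ← Finset.prod_div_distrib]
    refine Finset.prod_congr rfl fun i _ => ?_
    field_simp
  have hr : Tendsto (fun n : ℕ => (n:ℝ)^k / (n.descFactorial k : ℝ)) atTop (nhds 1) := by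
    have := hd1.inv₀ one_ne_zero
    simp only [inv_div, inv_one] at this
    exact this
  have hU : Tendsto (fun n : ℕ => (∑ i ∈ range n, x i) ^ k / (n.descFactorial k : ℝ))
      atTop (nhds ((1/2:ℝ)^k)) := by
    have h1' := (hS.pow k).mul hr
    rw [mul_one] at h1'
    refine Tendsto.congr' ?_ h1'
    filter_upwards [eventually_ge_atTop (max 1 k)] with n hn
    have hn1 : (1:ℕ) ≤ n := le_trans (le_max_left _ _) hn
    have hnk : k ≤ n := le_trans (le_max_right _ _) hn
    have hn0 : (n:ℝ) ≠ 0 := by positivity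
    have hd0 : (n.descFactorial k : ℝ) ≠ 0 := ne_of_gt (hdpos n hnk)
    field_simp
    rw [div_pow, div_mul_cancel₀ _ (pow_ne_zero _ hn0)]
  have hc0 : Tendsto (fun n : ℕ => ((n ^ k - n.descFactorial k : ℕ) : ℝ) /
      (n.descFactorial k : ℝ)) atTop (nhds 0) := by
    have h2 := hr.sub_const 1
    rw [sub_self] at h2
    refine Tendsto.congr' ?_ h2
    filter_upwards [eventually_ge_atTop (max 1 k)] with n hn
    have hnk : k ≤ n := le_trans (le_max_right _ _) hn
    have hd0 : (n.descFactorial k : ℝ) ≠ 0 := ne_of_gt (hdpos n hnk)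
    rw [Nat.cast_sub (Nat.descFactorial_le_pow n k), Nat.cast_pow, sub_div,
      div_self hd0]
  have hL : Tendsto (fun n : ℕ => (∑ i ∈ range n, x i) ^ k / (n.descFactorial k : ℝ)
      - ((n ^ k - n.descFactorial k : ℕ) : ℝ) / (n.descFactorial k : ℝ)) atTop
      (nhds ((1/2:ℝ)^k)) := by
    have := hU.sub hc0
    rwa [sub_zero] at this
  have ha : ∀ n : ℕ, k ≤ n →
      (∑ t ∈ (range n).powersetCard k, ∏ i ∈ t, x i) / (n.choose k : ℝ)
        = (k.factorial : ℝ) * (∑ t ∈ (range n).powersetCard k, ∏ i ∈ t, x i) /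
          (n.descFactorial k : ℝ) := by
    intro n hnk
    have hdc : (n.descFactorial k : ℝ) = (k.factorial : ℝ) * (n.choose k : ℝ) := by
      rw [Nat.descFactorial_eq_factorial_mul_choose]; push_cast; ring
    rw [hdc, mul_div_mul_left _ _ (by positivity : (k.factorial:ℝ) ≠ 0)]
  refine tendsto_of_tendsto_of_tendsto_of_le_of_le' hL hU ?_ ?_
  · filter_upwards [eventually_ge_atTop (max 1 k)] with n hn
    have hnk : k ≤ n := le_trans (le_max_right _ _) hn
    have hdn := hdpos n hnk
    have hkey := key_ineq (range n) k x (fun i _ => h0 i) (fun i _ => h1 i)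
    rw [card_range] at hkey
    rw [ha n hnk, ← sub_div]
    apply div_le_div_of_nonneg_right _ hdn.le
    linarith [hkey.2]
  · filter_upwards [eventually_ge_atTop (max 1 k)] with n hn
    have hnk : k ≤ n := le_trans (le_max_right _ _) hn
    have hdn := hdpos n hnk
    have hkey := key_ineq (range n) k x (fun i _ => h0 i) (fun i _ => h1 i)
    rw [card_range] at hkey
    rw [ha n hnk]
    exact div_le_div_of_nonneg_right hkey.1 hdn.le

/-- If `(X i)` is an i.i.d. sequence of random variables uniformly distributed on `(0,1)`
and `k ≥ 1` is a fixed integer, then almost surely the normalized elementary symmetric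
polynomial `σ_k⁽ⁿ⁾ / C(n,k)` converges to `(1/2)^k`. -/
theorem tendsto_esymm_div_choose_ae
    {Ω : Type*} [MeasurableSpace Ω] (P : Measure Ω) [IsProbabilityMeasure P]
    (X : ℕ → Ω → ℝ) (hmeas : ∀ i, Measurable (X i))
    (hindep : iIndepFun X P)
    (hunif : ∀ i, Measure.map (X i) P = volume.restrict (Set.Ioo (0:ℝ) 1))
    (k : ℕ) (hk : 1 ≤ k) :
    ∀ᵐ ω ∂P,
      Tendsto
        (fun n : ℕ =>
          (∑ s ∈ (Finset.range n).powersetCard k, ∏ i ∈ s, X i ω) /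
            (Nat.choose n k : ℝ))
        atTop (nhds ((1 / 2 : ℝ) ^ k)) := by
  -- a.s. all the `X i ω` lie in `(0,1)`
  have hmem : ∀ᵐ ω ∂P, ∀ i, X i ω ∈ Set.Ioo (0:ℝ) 1 := by
    rw [ae_all_iff]
    intro i
    have hms : MeasurableSet (X i ⁻¹' Set.Ioo (0:ℝ) 1) := (hmeas i) measurableSet_Ioo
    have h1 : P (X i ⁻¹' Set.Ioo (0:ℝ) 1) = 1 := by
      have := Measure.map_apply (hmeas i) (measurableSet_Ioo (a := (0:ℝ)) (b := 1))
        (μ := P)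
      rw [hunif i] at this
      rw [← this, Measure.restrict_apply measurableSet_Ioo, Set.inter_self,
        Real.volume_Ioo]
      norm_num
    rw [Filter.Eventually, mem_ae_iff]
    have := measure_compl hms (measure_ne_top P _)
    rw [h1, measure_univ] at this
    simp only [tsub_self] at this
    exact this
  -- integrability and the mean
  have hint : Integrable (X 0) P := by
    have hid : Integrable (fun x : ℝ => x) (Measure.map (X 0) P) := by
      rw [hunif 0]
      have h : IntervalIntegrable (fun x : ℝ => x) volume 0 1 :=
        intervalIntegral.intervalIntegrable_id
      rw [intervalIntegrable_iff_integrableOn_Ioo_of_le (by norm_num)] at h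
      exact h
    exact (integrable_map_measure aestronglyMeasurable_id (hmeas 0).aemeasurable).mp hid
  have hmean : ∫ ω, X 0 ω ∂P = 1/2 := by
    have : ∫ ω, X 0 ω ∂P = ∫ x, x ∂(Measure.map (X 0) P) :=
      (integral_map (hmeas 0).aemeasurable aestronglyMeasurable_id).symm
    rw [this, hunif 0]
    rw [← MeasureTheory.integral_Ioc_eq_integral_Ioo,
      ← intervalIntegral.integral_of_le (by norm_num : (0:ℝ) ≤ 1)]
    simp [integral_id]
  -- strong law of large numbers
  have hSLLN := strong_law_ae_real X hint
    (fun i j hij => hindep.indepFun hij)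
    (fun i => ⟨(hmeas i).aemeasurable, (hmeas 0).aemeasurable,
      by rw [hunif i, hunif 0]⟩)
  rw [hmean] at hSLLN
  filter_upwards [hmem, hSLLN] with ω hω hSω
  exact det_tendsto (fun i => X i ω) (fun i => (hω i).1.le) (fun i => (hω i).2.le) k hSω
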